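/- With V, W, m_NN, Δ_NN as in the NN↔T case of the annular differential (m_NN: V⊗V → W sends v₊⊗v₋ and v₋⊗v₊ to w₋ and the rest to 0; Δ_NN: W → V⊗V sends w₊ to v₊⊗v₋+v₋⊗v₊ and w₋ to 0), both m_NN and Δ_NN are sl2-equivariant, where V carries the defining representation (h·v± = ±v±, e·v₋ = v₊, e·v₊ = 0, f·v₊ = v₋, f·v₋ = 0) and W the trivial representation. -/
import Mathlib


/-- The actions of the `sl2`-basis elements on the defining representation
`V = span{v₊, v₋}` over `ℤ/2` (index `0 ↦ v₊`, `1 ↦ v₋`): `0 ↦ e`, `1 ↦ f`, `2 ↦ h`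
with `h·v± = ±v±`, `e·v₋ = v₊`, `e·v₊ = 0`, `f·v₊ = v₋`, `f·v₋ = 0`. -/
def sl2act (g : Fin 3) (v : Fin 2 → ZMod 2) : Fin 2 → ZMod 2 :=
  match (g : ℕ) with
  | 0 => ![v 1, 0]
  | 1 => ![0, v 0]
  | _ => ![v 0, -v 1]

/-- The diagonal `sl2`-action on `V ⊗ V` (modelled as `Fin 2 × Fin 2 → ZMod 2`):
`x·(a⊗b) = (x·a)⊗b + a⊗(x·b)`. -/
def sl2diag (g : Fin 3) (X : Fin 2 × Fin 2 → ZMod 2) : Fin 2 × Fin 2 → ZMod 2 :=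
  fun p => sl2act g (fun t => X (t, p.2)) p.1 + sl2act g (fun t => X (p.1, t)) p.2

/-- The annular merge `m_NN : V⊗V → W`: `v₊⊗v₋, v₋⊗v₊ ↦ w₋`, rest `↦ 0`. -/
def mNN (X : Fin 2 × Fin 2 → ZMod 2) : Fin 2 → ZMod 2 :=
  ![0, X (0, 1) + X (1, 0)]

/-- The annular split `Δ_NN : W → V⊗V`: `w₊ ↦ v₊⊗v₋ + v₋⊗v₊`, `w₋ ↦ 0`. -/
def deltaNN (w : Fin 2 → ZMod 2) : Fin 2 × Fin 2 → ZMod 2 :=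
  fun p => if p.1 ≠ p.2 then w 0 else 0

/-- `m_NN` and `Δ_NN` are `sl2`-equivariant, where `V` carries the defining
representation (diagonally on `V ⊗ V`) and `W` the trivial representation:
`m_NN(x·(a⊗b)) = x·m_NN(a⊗b) = 0` (since `W` is trivial) and
`x·Δ_NN(w) = Δ_NN(x·w) = 0`. -/
theorem mNN_deltaNN_equivariant (g : Fin 3) :
    (∀ X : Fin 2 × Fin 2 → ZMod 2, mNN (sl2diag g X) = 0) ∧
    (∀ (w : Fin 2 → ZMod 2), sl2diag g (deltaNN w) = 0) := by
  constructor
  · intro X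
    fin_cases g <;> funext i <;> fin_cases i <;>
      simp [mNN, sl2diag, sl2act, CharTwo.add_self_eq_zero]
  · intro w
    funext p
    obtain ⟨i, j⟩ := p
    fin_cases g <;> fin_cases i <;> fin_cases j <;>
      simp [sl2diag, sl2act, deltaNN, CharTwo.add_self_eq_zero]
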